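/- Let H be a Hilbert space, T a compact operator on H, and {T_h} a family of compact operators converging to T in operator norm. Let μ be a nonzero eigenvalue of T isolated by a circle Γ in the complex plane enclosing no other spectrum of T, and define the Riesz spectral projections E = (1/2πi)∮_Γ (z−T)^{-1} dz and E_h = (1/2πi)∮_Γ (z−T_h)^{-1} dz. Suppose T_h = P_h T where P_h is a projection. Then there exists a constant C_μ such that for all sufficiently small h and all u in the eigenspace M(μ) of T, ‖u − E_h u‖ ≤ C_μ ‖(I − P_h)u‖. -/

import Mathlib

open Filter Metric

/-- spectral projection estimate `‖u − E_h u‖ ≤ C_μ ‖(I − P_h)u‖` on the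
eigenspace `M(μ)`, where `E_h` is the Riesz spectral projection of `T_h = P_h T` over the
circle `Γ = C(μ, r)` isolating the nonzero eigenvalue `μ` of the compact operator `T`. -/
theorem stmt_11 {H : Type*} [NormedAddCommGroup H] [InnerProductSpace ℂ H] [CompleteSpace H]
    (T : H →L[ℂ] H) (hT : IsCompactOperator (⇑T))
    (μ : ℂ) (hμ : μ ≠ 0) (r : ℝ) (hr : 0 < r)
    (hΓ : ∀ z ∈ sphere μ r, z ∉ spectrum ℂ T)
    (honly : ∀ z ∈ ball μ r, z ∈ spectrum ℂ T → z = μ)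
    (hμeig : ∃ u : H, u ≠ 0 ∧ T u = μ • u)
    (P : ℕ → H →L[ℂ] H) (hP : ∀ n, (P n).comp (P n) = P n)
    (hconv : Tendsto (fun n => ‖T - (P n).comp T‖) atTop (nhds 0))
    (R : ℕ → ℂ → H →L[ℂ] H)
    (hR : ∀ᶠ n in atTop, ∀ z ∈ sphere μ r,
      (z • (1 : H →L[ℂ] H) - (P n).comp T).comp (R n z) = 1 ∧
      (R n z).comp (z • (1 : H →L[ℂ] H) - (P n).comp T) = 1) :
    ∃ C : ℝ, ∀ᶠ n in atTop, ∀ u : H, T u = μ • u →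
      ‖u - ((2 * (Real.pi : ℂ) * Complex.I)⁻¹ • ∮ z in C(μ, r), R n z) u‖
        ≤ C * ‖u - P n u‖ := by
  have pi_pos := Real.pi_pos
  -- units on the circle
  have hunit : ∀ z ∈ sphere μ r, IsUnit (z • (1 : H →L[ℂ] H) - T) := by
    intro z hz
    have h := hΓ z hz
    rw [spectrum.notMem_iff, Algebra.algebraMap_eq_smul_one] at h
    exact h
  set S : ℂ → H →L[ℂ] H := fun z => Ring.inverse (z • (1 : H →L[ℂ] H) - T) with hSdef
  have haff : Continuous (fun z : ℂ => z • (1 : H →L[ℂ] H) - T) := by fun_prop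
  have hScont : ContinuousOn S (sphere μ r) := by
    intro z hz
    have h2 : ContinuousAt Ring.inverse ((hunit z hz).unit : H →L[ℂ] H) :=
      NormedRing.inverse_continuousAt (hunit z hz).unit
    rw [(hunit z hz).unit_spec] at h2
    have h4 : ContinuousAt (fun y : ℂ => y • (1 : H →L[ℂ] H) - T) z := haff.continuousAt
    exact (ContinuousAt.comp (f := fun y : ℂ => y • (1 : H →L[ℂ] H) - T) h2 h4).continuousWithinAt
  -- sup bound for S on the sphere
  obtain ⟨z₀, hz₀, hz₀max⟩ := (isCompact_sphere μ r).exists_isMaxOn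
    (NormedSpace.sphere_nonempty.mpr hr.le) (hScont.norm)
  set M : ℝ := max ‖S z₀‖ 1 with hMdef
  have hM1 : (1:ℝ) ≤ M := le_max_right _ _
  have hM0 : (0:ℝ) < M := lt_of_lt_of_le one_pos hM1
  have hSM : ∀ z ∈ sphere μ r, ‖S z‖ ≤ M := fun z hz => (hz₀max hz).trans (le_max_left _ _)
  have hz_ne : ∀ z ∈ sphere μ r, z - μ ≠ 0 := by
    intro z hz
    have : ‖z - μ‖ = r := mem_sphere_iff_norm.mp hz
    intro h; rw [h, norm_zero] at this; exact absurd this.symm hr.ne'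
  have hzr : ∀ z ∈ sphere μ r, ‖z - μ‖ = r := fun z hz => mem_sphere_iff_norm.mp hz
  refine ⟨2 * M * ‖μ‖, ?_⟩
  have hev2 : ∀ᶠ n in atTop, ‖T - (P n).comp T‖ < (2 * M)⁻¹ :=
    hconv.eventually_lt_const (by positivity)
  filter_upwards [hR, hev2] with n hRn hn u hu
  set Th : H →L[ℂ] H := (P n).comp T with hThdef
  -- R n z is the ring inverse
  have hRunit : ∀ z ∈ sphere μ r, IsUnit (z • (1 : H →L[ℂ] H) - Th) := by
    intro z hz
    exact ⟨⟨_, R n z, (hRn z hz).1, (hRn z hz).2⟩, rfl⟩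
  have hRinv : ∀ z ∈ sphere μ r, Ring.inverse (z • (1 : H →L[ℂ] H) - Th) = R n z := by
    intro z hz
    exact Ring.inverse_unit ⟨_, R n z, (hRn z hz).1, (hRn z hz).2⟩
  have hRcont : ContinuousOn (R n) (sphere μ r) := by
    have hc : ContinuousOn (fun z => Ring.inverse (z • (1 : H →L[ℂ] H) - Th)) (sphere μ r) := by
      intro z hz
      have h2 : ContinuousAt Ring.inverse ((hRunit z hz).unit : H →L[ℂ] H) :=
        NormedRing.inverse_continuousAt (hRunit z hz).unit
      rw [(hRunit z hz).unit_spec] at h2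
      have h4 : ContinuousAt (fun y : ℂ => y • (1 : H →L[ℂ] H) - Th) z :=
        (by fun_prop : Continuous (fun y : ℂ => y • (1 : H →L[ℂ] H) - Th)).continuousAt
      exact (ContinuousAt.comp (f := fun y : ℂ => y • (1 : H →L[ℂ] H) - Th) h2
        h4).continuousWithinAt
    exact hc.congr fun z hz => (hRinv z hz).symm
  -- uniform bound on R n z
  have hRbound : ∀ z ∈ sphere μ r, ‖R n z‖ ≤ 2 * M := by
    intro z hz
    have e1 : (z • (1 : H →L[ℂ] H) - T) * S z = 1 := Ring.mul_inverse_cancel _ (hunit z hz)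
    have e2 : R n z * (z • (1 : H →L[ℂ] H) - Th) = 1 := (hRn z hz).2
    have key : R n z = S z + R n z * ((Th - T) * S z) := by
      calc R n z = R n z * ((z • (1 : H →L[ℂ] H) - T) * S z) := by rw [e1, mul_one]
        _ = R n z * (z • (1 : H →L[ℂ] H) - Th) * S z + R n z * ((Th - T) * S z) := by
            noncomm_ring
        _ = S z + R n z * ((Th - T) * S z) := by rw [e2, one_mul]
    have hnorm : ‖R n z‖ ≤ ‖S z‖ + ‖R n z‖ * ‖Th - T‖ * ‖S z‖ := by
      calc ‖R n z‖ = ‖S z + R n z * ((Th - T) * S z)‖ := by rw [← key]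
        _ ≤ ‖S z‖ + ‖R n z * ((Th - T) * S z)‖ := norm_add_le _ _
        _ ≤ ‖S z‖ + ‖R n z‖ * ‖(Th - T) * S z‖ := by gcongr; exact norm_mul_le _ _
        _ ≤ ‖S z‖ + ‖R n z‖ * (‖Th - T‖ * ‖S z‖) :=
            add_le_add le_rfl (mul_le_mul_of_nonneg_left (norm_mul_le _ _) (norm_nonneg _))
        _ = ‖S z‖ + ‖R n z‖ * ‖Th - T‖ * ‖S z‖ := by ring
    have hTh : ‖Th - T‖ ≤ (2 * M)⁻¹ := by
      rw [norm_sub_rev]; exact hn.le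
    have hSz := hSM z hz
    have h3 : ‖R n z‖ * ‖Th - T‖ * ‖S z‖ ≤ ‖R n z‖ * (2 * M)⁻¹ * M := by
      gcongr <;> positivity
    have h4 : ‖R n z‖ * (2 * M)⁻¹ * M = ‖R n z‖ / 2 := by
      field_simp
    rw [h4] at h3
    linarith [hnorm, hSz]
  -- key pointwise identity
  set w : H := u - P n u with hwdef
  have key : ∀ z ∈ sphere μ r,
      R n z u = (z - μ)⁻¹ • u - ((z - μ)⁻¹ * μ) • R n z w := by
    intro z hz
    have happ : (z • (1 : H →L[ℂ] H) - Th) u = (z - μ) • u + μ • w := by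
      simp only [ContinuousLinearMap.sub_apply, ContinuousLinearMap.smul_apply,
        ContinuousLinearMap.one_apply, hThdef, ContinuousLinearMap.comp_apply, hu, map_smul,
        hwdef, sub_smul, smul_sub]
      abel
    have h1 : u = (z - μ) • R n z u + μ • R n z w := by
      have := congrArg (R n z) happ
      rwa [← ContinuousLinearMap.comp_apply, (hRn z hz).2, ContinuousLinearMap.one_apply,
        map_add, map_smul, map_smul] at this
    have hzne := hz_ne z hz
    have h2 : (z - μ) • R n z u = u - μ • R n z w := by
      rw [eq_sub_iff_add_eq]; exact h1.symm
    have h3 : R n z u = (z - μ)⁻¹ • (u - μ • R n z w) := by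
      rw [← h2, inv_smul_smul₀ hzne]
    rw [h3, smul_sub, smul_smul]
  -- integrability
  have hcont_sub : ContinuousOn (fun z : ℂ => (z - μ)⁻¹) (sphere μ r) :=
    (continuousOn_id.sub continuousOn_const).inv₀ hz_ne
  have hcont_Ru : ContinuousOn (fun z => R n z w) (sphere μ r) :=
    (ContinuousLinearMap.apply ℂ H w).continuous.comp_continuousOn hRcont
  have hInt1 : CircleIntegrable (fun z : ℂ => (z - μ)⁻¹ • u) μ r :=
    (hcont_sub.smul continuousOn_const).circleIntegrable hr.le
  have hInt2 : CircleIntegrable (fun z : ℂ => ((z - μ)⁻¹ * μ) • R n z w) μ r :=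
    ((hcont_sub.mul continuousOn_const).smul hcont_Ru).circleIntegrable hr.le
  have hIntR : CircleIntegrable (R n) μ r := hRcont.circleIntegrable hr.le
  -- apply commutes with the integral
  have happly : (∮ z in C(μ, r), R n z) u = ∮ z in C(μ, r), R n z u := by
    simp only [circleIntegral]
    rw [ContinuousLinearMap.intervalIntegral_apply ((circleIntegrable_iff r).mp hIntR)]
    simp only [ContinuousLinearMap.smul_apply]
  -- evaluate the integral
  have hEq : (∮ z in C(μ, r), R n z u)
      = (2 * (Real.pi : ℂ) * Complex.I) • u - ∮ z in C(μ, r), ((z - μ)⁻¹ * μ) • R n z w := by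
    rw [circleIntegral.integral_congr hr.le (fun z hz => key z hz),
      circleIntegral.integral_sub hInt1 hInt2,
      circleIntegral.integral_smul_const,
      circleIntegral.integral_sub_inv_of_mem_ball (mem_ball_self hr)]
  set J : H := ∮ z in C(μ, r), ((z - μ)⁻¹ * μ) • R n z w with hJdef
  have h2pi : (2 * (Real.pi : ℂ) * Complex.I) ≠ 0 := by
    simp [Real.pi_ne_zero, Complex.I_ne_zero, Complex.ext_iff]
  have hfinal : u - ((2 * (Real.pi : ℂ) * Complex.I)⁻¹ • ∮ z in C(μ, r), R n z) u
      = (2 * (Real.pi : ℂ) * Complex.I)⁻¹ • J := by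
    rw [ContinuousLinearMap.smul_apply, happly, hEq, smul_sub, smul_smul,
      inv_mul_cancel₀ h2pi, one_smul]
    abel
  -- norm bound on J
  have hJbound : ‖J‖ ≤ 2 * Real.pi * r * (r⁻¹ * ‖μ‖ * (2 * M * ‖w‖)) := by
    rw [hJdef]
    apply circleIntegral.norm_integral_le_of_norm_le_const hr.le
    intro z hz
    rw [norm_smul, norm_mul, norm_inv, hzr z hz]
    calc r⁻¹ * ‖μ‖ * ‖R n z w‖ ≤ r⁻¹ * ‖μ‖ * (‖R n z‖ * ‖w‖) :=
          mul_le_mul_of_nonneg_left ((R n z).le_opNorm w) (by positivity)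
      _ ≤ r⁻¹ * ‖μ‖ * (2 * M * ‖w‖) :=
          mul_le_mul_of_nonneg_left
            (mul_le_mul_of_nonneg_right (hRbound z hz) (norm_nonneg _)) (by positivity)
  have hnorminv : ‖(2 * (Real.pi : ℂ) * Complex.I)⁻¹‖ = (2 * Real.pi)⁻¹ := by
    rw [norm_inv]
    simp [norm_mul, Complex.norm_I, Complex.norm_real, abs_of_pos pi_pos]
  rw [hfinal, norm_smul, hnorminv]
  calc (2 * Real.pi)⁻¹ * ‖J‖ ≤ (2 * Real.pi)⁻¹ * (2 * Real.pi * r * (r⁻¹ * ‖μ‖ * (2 * M * ‖w‖))) := by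
        gcongr
    _ = 2 * M * ‖μ‖ * ‖w‖ := by
        field_simp
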